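/- The class of pseudocentral groups is local: if G is a group such that every pair of elements a, b of G is contained in some pseudocentral subgroup X of G (i.e. a subgroup X with a, b ∈ X such that P(X) = X, where X is viewed as a group in its own right), then G itself is pseudocentral. In particular, if every finitely generated subgroup of G is contained in a pseudocentral subgroup, then G is pseudocentral. -/

import Mathlib

/-- The pseudocentre of a group `G`: the intersection of the normal closures of the
centralizers of the elements of `G`. -/
def P (G : Type*) [Group G] : Subgroup G :=
  ⨅ g : G, Subgroup.normalClosure ↑(Subgroup.centralizer {g})

lemma pseudocentral_aux {G : Type*} [Group G]
    (h : ∀ a b : G, ∃ X : Subgroup G, a ∈ X ∧ b ∈ X ∧ P X = ⊤) : P G = ⊤ := by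
  rw [eq_top_iff]
  intro b _
  rw [P, Subgroup.mem_iInf]
  intro g
  obtain ⟨X, hg, hb, hX⟩ := h g b
  have hbX : (⟨b, hb⟩ : X) ∈ P X := by rw [hX]; trivial
  rw [P, Subgroup.mem_iInf] at hbX
  have hbX' := hbX ⟨g, hg⟩
  set N : Subgroup X :=
    (Subgroup.normalClosure ((Subgroup.centralizer {g} : Subgroup G) : Set G)).comap X.subtype
    with hN
  haveI : N.Normal := Subgroup.Normal.comap Subgroup.normalClosure_normal X.subtype
  have hsub : (Subgroup.centralizer {(⟨g, hg⟩ : X)} : Subgroup X) ≤ N := by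
    intro x hx
    simp only [hN, Subgroup.mem_comap]
    apply Subgroup.subset_normalClosure
    exact Subgroup.mem_centralizer_singleton_iff.mpr
      (congrArg Subtype.val (Subgroup.mem_centralizer_singleton_iff.mp hx))
  have := Subgroup.normalClosure_le_normal hsub hbX'
  simpa [hN, Subgroup.mem_comap, Subgroup.mem_subgroupOf] using this

/-- The class of pseudocentral groups is local. -/
theorem pseudocentral_is_local {G : Type*} [Group G] :
    ((∀ a b : G, ∃ X : Subgroup G, a ∈ X ∧ b ∈ X ∧ P X = ⊤) → P G = ⊤) ∧
    ((∀ H : Subgroup G, H.FG → ∃ X : Subgroup G, H ≤ X ∧ P X = ⊤) → P G = ⊤) := by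
  refine ⟨pseudocentral_aux, fun h => pseudocentral_aux fun a b => ?_⟩
  obtain ⟨X, hle, hP⟩ := h (Subgroup.closure {a, b})
    ((Subgroup.fg_iff _).mpr ⟨{a, b}, rfl, Set.toFinite _⟩)
  exact ⟨X, hle (Subgroup.subset_closure (by simp)),
    hle (Subgroup.subset_closure (by simp)), hP⟩
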